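/- Assume the scheme \{p^{n+1}_{j+1/2}\} given by the monotone junction scheme with Godunov fluxes g^{H_L} (for j ≤ −2), g^{H_R} (for j ≥ 1), and junction function F₀ at j ∈ {−1,0}, satisfies the CFL condition Δx/Δt ≥ 2L and that F₀(a_L,a_R)=F₀(c_L,c_R)=0. If p^0_{j+1/2} ∈ [a_L,c_L] for j ≤ −1 and p^0_{j+1/2} ∈ [a_R,c_R] for j ≥ 0, then for all n ∈ ℕ, p^n_{j+1/2} ∈ [a_L,c_L] for j ≤ −1 and p^n_{j+1/2} ∈ [a_R,c_R] for j ≥ 0. -/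
import Mathlib


open Set

/-- Stability of the monotone junction scheme: the numerical solution stays in the
invariant box `[a_L,c_L] × [a_R,c_R]`. Here `P n j` stands for `p^n_{j+1/2}`. -/
theorem scheme_stability
    (Δt Δx L aL cL aR cR : ℝ)
    (hΔt : 0 < Δt) (hΔx : 0 < Δx) (hL : 0 ≤ L)
    (hCFL : 2 * L ≤ Δx / Δt)
    (haLcL : aL ≤ cL) (haRcR : aR ≤ cR)
    (HL HR : ℝ → ℝ) (gL gR F0 : ℝ → ℝ → ℝ)
    (hgLcons : ∀ p, gL p p = HL p) (hgRcons : ∀ p, gR p p = HR p)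
    (hgL1 : ∀ b, Monotone fun a => gL a b) (hgL2 : ∀ a, Antitone fun b => gL a b)
    (hgR1 : ∀ b, Monotone fun a => gR a b) (hgR2 : ∀ a, Antitone fun b => gR a b)
    (hF01 : ∀ b, Monotone fun a => F0 a b) (hF02 : ∀ a, Antitone fun b => F0 a b)
    (hgLLip1 : ∀ a a' b, |gL a b - gL a' b| ≤ L * |a - a'|)
    (hgLLip2 : ∀ a b b', |gL a b - gL a b'| ≤ L * |b - b'|)
    (hgRLip1 : ∀ a a' b, |gR a b - gR a' b| ≤ L * |a - a'|)
    (hgRLip2 : ∀ a b b', |gR a b - gR a b'| ≤ L * |b - b'|)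
    (hF0Lip1 : ∀ a a' b, |F0 a b - F0 a' b| ≤ L * |a - a'|)
    (hF0Lip2 : ∀ a b b', |F0 a b - F0 a b'| ≤ L * |b - b'|)
    (hHL0 : HL aL = 0) (hHL0' : HL cL = 0) (hHR0 : HR aR = 0) (hHR0' : HR cR = 0)
    (hF00 : F0 aL aR = 0) (hF00' : F0 cL cR = 0)
    (G : ℤ → ℝ → ℝ → ℝ)
    (hG : ∀ j : ℤ, G j = if j ≤ -1 then gL else if 1 ≤ j then gR else F0)
    (P : ℕ → ℤ → ℝ)
    (hscheme : ∀ (n : ℕ) (j : ℤ), P (n + 1) j =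
        P n j - (Δt / Δx) * (G (j + 1) (P n j) (P n (j + 1)) - G j (P n (j - 1)) (P n j)))
    (hinit : ∀ j : ℤ, (j ≤ -1 → P 0 j ∈ Icc aL cL) ∧ (0 ≤ j → P 0 j ∈ Icc aR cR)) :
    ∀ (n : ℕ) (j : ℤ), (j ≤ -1 → P n j ∈ Icc aL cL) ∧ (0 ≤ j → P n j ∈ Icc aR cR) := by
  have hlam : 0 ≤ Δt / Δx := le_of_lt (div_pos hΔt hΔx)
  have h2lam : 2 * L * (Δt / Δx) ≤ 1 := by
    have h1 : (Δx / Δt) * (Δt / Δx) = 1 := by field_simp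
    have h2 := mul_le_mul_of_nonneg_right hCFL hlam
    linarith
  -- key monotonicity of the scheme map
  have key : ∀ (Gl Gr : ℝ → ℝ → ℝ),
      (∀ b, Monotone fun a => Gl a b) →
      (∀ a b b', |Gl a b - Gl a b'| ≤ L * |b - b'|) →
      (∀ a, Antitone fun b => Gr a b) →
      (∀ a a' b, |Gr a b - Gr a' b| ≤ L * |a - a'|) →
      ∀ w w' x x' u u', w ≤ w' → x ≤ x' → u ≤ u' →
        x - (Δt / Δx) * (Gr x u - Gl w x) ≤ x' - (Δt / Δx) * (Gr x' u' - Gl w' x') := by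
    intro Gl Gr hMon hLip hAnt hLip' w w' x x' u u' hw hx hu
    have e1 : Gr x' u' - Gr x u' ≤ L * (x' - x) := by
      calc Gr x' u' - Gr x u' ≤ |Gr x' u' - Gr x u'| := le_abs_self _
        _ ≤ L * |x' - x| := hLip' x' x u'
        _ = L * (x' - x) := by rw [abs_of_nonneg (by linarith)]
    have e2 : Gr x u' ≤ Gr x u := hAnt x hu
    have e3 : Gl w x ≤ Gl w' x := hMon x hw
    have e4 : Gl w' x - Gl w' x' ≤ L * (x' - x) := by
      calc Gl w' x - Gl w' x' ≤ |Gl w' x - Gl w' x'| := le_abs_self _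
        _ ≤ L * |x - x'| := hLip _ _ _
        _ = L * (x' - x) := by rw [abs_sub_comm, abs_of_nonneg (by linarith)]
    have hdiff : (Gr x' u' - Gl w' x') - (Gr x u - Gl w x) ≤ 2 * L * (x' - x) := by
      linarith
    have t1 := mul_le_mul_of_nonneg_left hdiff hlam
    have t2 := mul_le_mul_of_nonneg_right h2lam (by linarith : (0:ℝ) ≤ x' - x)
    have heq : (Δt / Δx) * (2 * L * (x' - x)) = 2 * L * (Δt / Δx) * (x' - x) := by ring
    nlinarith [t1, t2, heq]
  -- properties of each numerical flux
  have hGprop : ∀ j : ℤ, (∀ b, Monotone fun a => G j a b) ∧ (∀ a, Antitone fun b => G j a b)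
      ∧ (∀ a a' b, |G j a b - G j a' b| ≤ L * |a - a'|)
      ∧ (∀ a b b', |G j a b - G j a b'| ≤ L * |b - b'|) := by
    intro j
    rw [hG j]
    split_ifs
    · exact ⟨hgL1, hgL2, hgLLip1, hgLLip2⟩
    · exact ⟨hgR1, hgR2, hgRLip1, hgRLip2⟩
    · exact ⟨hF01, hF02, hF0Lip1, hF0Lip2⟩
  -- steady states are fixed points
  have hfix : ∀ (β : ℤ → ℝ) (x y : ℝ), (∀ k : ℤ, β k = if k ≤ -1 then x else y) →
      HL x = 0 → HR y = 0 → F0 x y = 0 →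
      ∀ j : ℤ, G (j + 1) (β j) (β (j + 1)) - G j (β (j - 1)) (β j) = 0 := by
    intro β x y hβ hx hy hxy j
    by_cases h1 : j ≤ -2
    · simp only [hG, hβ, if_pos (show j + 1 ≤ -1 by omega), if_pos (show j ≤ -1 by omega),
        if_pos (show j - 1 ≤ -1 by omega)]
      exact sub_self _
    · by_cases h2 : j = -1
      · simp only [hG, hβ, if_neg (show ¬ j + 1 ≤ -1 by omega), if_neg (show ¬ 1 ≤ j + 1 by omega),
          if_pos (show j ≤ -1 by omega), if_pos (show j - 1 ≤ -1 by omega)]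
        rw [hgLcons, hx, hxy]; ring
      · by_cases h3 : j = 0
        · simp only [hG, hβ, if_neg (show ¬ j + 1 ≤ -1 by omega), if_pos (show 1 ≤ j + 1 by omega),
            if_neg (show ¬ j ≤ -1 by omega), if_neg (show ¬ 1 ≤ j by omega),
            if_pos (show j - 1 ≤ -1 by omega)]
          rw [hgRcons, hy, hxy]; ring
        · simp only [hG, hβ, if_neg (show ¬ j + 1 ≤ -1 by omega), if_pos (show 1 ≤ j + 1 by omega),
            if_neg (show ¬ j ≤ -1 by omega), if_pos (show 1 ≤ j by omega),
            if_neg (show ¬ j - 1 ≤ -1 by omega)]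
          exact sub_self _
  obtain ⟨α, hαval⟩ : ∃ α : ℤ → ℝ, ∀ k : ℤ, α k = if k ≤ -1 then aL else aR :=
    ⟨_, fun k => rfl⟩
  obtain ⟨γ, hγval⟩ : ∃ γ : ℤ → ℝ, ∀ k : ℤ, γ k = if k ≤ -1 then cL else cR :=
    ⟨_, fun k => rfl⟩
  have hαfix := hfix α aL aR hαval hHL0 hHR0 hF00
  have hγfix := hfix γ cL cR hγval hHL0' hHR0' hF00'
  intro n
  induction n with
  | zero => exact hinit
  | succ n ih =>
    have hlow : ∀ k : ℤ, α k ≤ P n k := by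
      intro k
      rw [hαval]
      by_cases hk : k ≤ -1
      · rw [if_pos hk]; exact ((ih k).1 hk).1
      · rw [if_neg hk]; exact ((ih k).2 (by omega)).1
    have hhigh : ∀ k : ℤ, P n k ≤ γ k := by
      intro k
      rw [hγval]
      by_cases hk : k ≤ -1
      · rw [if_pos hk]; exact ((ih k).1 hk).2
      · rw [if_neg hk]; exact ((ih k).2 (by omega)).2
    intro j
    have hlow' : α j ≤ P (n + 1) j := by
      have h0 := hαfix j
      have hk := key (G j) (G (j + 1)) (hGprop j).1 (hGprop j).2.2.2
        (hGprop (j + 1)).2.1 (hGprop (j + 1)).2.2.1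
        (α (j - 1)) (P n (j - 1)) (α j) (P n j) (α (j + 1)) (P n (j + 1))
        (hlow _) (hlow _) (hlow _)
      rw [hscheme]
      calc α j = α j - (Δt / Δx) * (G (j + 1) (α j) (α (j + 1)) - G j (α (j - 1)) (α j)) := by
            rw [h0]; ring
        _ ≤ _ := hk
    have hhigh' : P (n + 1) j ≤ γ j := by
      have h0 := hγfix j
      have hk := key (G j) (G (j + 1)) (hGprop j).1 (hGprop j).2.2.2
        (hGprop (j + 1)).2.1 (hGprop (j + 1)).2.2.1
        (P n (j - 1)) (γ (j - 1)) (P n j) (γ j) (P n (j + 1)) (γ (j + 1))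
        (hhigh _) (hhigh _) (hhigh _)
      rw [hscheme]
      calc P n j - (Δt / Δx) * (G (j + 1) (P n j) (P n (j + 1)) - G j (P n (j - 1)) (P n j))
          ≤ γ j - (Δt / Δx) * (G (j + 1) (γ j) (γ (j + 1)) - G j (γ (j - 1)) (γ j)) := hk
        _ = γ j := by rw [h0]; ring
    constructor
    · intro hj
      rw [hαval, if_pos hj] at hlow'
      rw [hγval, if_pos hj] at hhigh'
      exact ⟨hlow', hhigh'⟩
    · intro hj
      rw [hαval, if_neg (by omega)] at hlow'
      rw [hγval, if_neg (by omega)] at hhigh'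
      exact ⟨hlow', hhigh'⟩
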